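/- Let q be a monotone quadratic form on L⁰(m) whose domain is a lattice. Then for every f ∈ D(q) one has |f| ∈ D(q) and q(f) = q(|f|), and moreover q(f₊, f₋) = 0 where f₊ = f ∨ 0 and f₋ = (−f) ∨ 0. -/

import Mathlib

open MeasureTheory ENNReal

/-- The bilinear form induced by a quadratic form via polarization. -/
noncomputable def polar {V : Type*} [AddCommGroup V] (q : V → ℝ≥0∞) (f g : V) : ℝ :=
  ((q (f + g)).toReal - (q (f - g)).toReal) / 4

private instance {α : Type*} [MeasurableSpace α] {μ : MeasureTheory.Measure α} :
    AddLeftMono (α →ₘ[μ] ℝ) := by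
  constructor
  intro c f g h
  rw [← MeasureTheory.AEEqFun.coeFn_le] at h ⊢
  filter_upwards [h, MeasureTheory.AEEqFun.coeFn_add c f,
    MeasureTheory.AEEqFun.coeFn_add c g] with x h1 h2 h3
  rw [h2, h3]
  exact add_le_add_right h1 _

private instance {α : Type*} [MeasurableSpace α] {μ : MeasureTheory.Measure α} :
    AddRightMono (α →ₘ[μ] ℝ) :=
  addRightMono_of_addLeftMono _

theorem stmt7 {α : Type*} [MeasurableSpace α] {μ : Measure α} [SigmaFinite μ]
    (q : (α →ₘ[μ] ℝ) → ℝ≥0∞)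
    (hhom : ∀ (l : ℝ) (f : α →ₘ[μ] ℝ), q (l • f) = ENNReal.ofReal (l ^ 2) * q f)
    (hpar : ∀ f g : α →ₘ[μ] ℝ, q (f + g) + q (f - g) = 2 * q f + 2 * q g)
    -- the domain of `q` is a lattice
    (hlat : ∀ f g : α →ₘ[μ] ℝ, q f < ⊤ → q g < ⊤ → q (f ⊓ g) < ⊤ ∧ q (f ⊔ g) < ⊤)
    -- `q` is monotone
    (hmono : ∀ f g : α →ₘ[μ] ℝ, q f < ⊤ → q g < ⊤ → |f| ≤ |g| → q f ≤ q g)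
    (f : α →ₘ[μ] ℝ) (hf : q f < ⊤) :
    q |f| < ⊤ ∧ q f = q |f| ∧ polar q (f ⊔ 0) ((-f) ⊔ 0) = 0 := by
  have h0 : q 0 < ⊤ := by
    have := hhom 0 f
    simp at this
    simp [this]
  have hneg : q (-f) = q f := by
    have := hhom (-1) f
    simpa using this
  have hpos : q (f ⊔ 0) < ⊤ := (hlat f 0 hf h0).2
  have hnegp : q ((-f) ⊔ 0) < ⊤ := (hlat (-f) 0 (hneg ▸ hf) h0).2
  have hsum : f ⊔ 0 + ((-f) ⊔ 0) = |f| := by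
    rw [← posPart_def, ← negPart_def, posPart_add_negPart]
  have hdiff : f ⊔ 0 - ((-f) ⊔ 0) = f := by
    rw [← posPart_def, ← negPart_def, posPart_sub_negPart]
  have hparf := hpar (f ⊔ 0) ((-f) ⊔ 0)
  rw [hsum, hdiff] at hparf
  have habs : q |f| < ⊤ := by
    refine lt_of_le_of_lt (le_trans le_self_add (le_of_eq hparf)) ?_
    exact ENNReal.add_lt_top.2 ⟨ENNReal.mul_lt_top (by simp) hpos,
      ENNReal.mul_lt_top (by simp) hnegp⟩
  have heq : q f = q |f| := by
    refine le_antisymm (hmono f |f| hf habs (by simp)) (hmono |f| f habs hf (by simp))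
  refine ⟨habs, heq, ?_⟩
  simp [polar, hsum, hdiff, heq]
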